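/- arXiv:2111.05137 — 2 statements merged into one kernel-verified Lean document; each statement's English description precedes it below -/
import Mathlib

section
/- Under the random effects model φ ~ Normal(0, τ² P^{-1} I_P), β ~ Normal(ω₀ φ, τ² P^{-1} I_P), with Σ = I_P (so λ̃ = λ̄² = 1) and σ_a² = 1, the selection bias Δ(1) = (φᵀβ)/(1 + φᵀφ) converges in probability to ω₀ τ²/(1 + τ²) as P → ∞. -/
open MeasureTheory ProbabilityTheory Matrix Filter
open Real



lemma my_integrable_pow_mul_exp {b : ℝ} (hb : 0 < b) (n : ℕ) :
    Integrable fun x : ℝ => x ^ n * Real.exp (-b * x ^ 2) := by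
  have h2 : (0:ℝ) < b/2 := by linarith
  have hC : (0:ℝ) ≤ (n.factorial : ℝ) * (2/b)^n + 1 := by positivity
  refine Integrable.mono' (((integrable_exp_neg_mul_sq h2).const_mul ((n.factorial : ℝ) * (2/b)^n + 1))) ?_ ?_
  · exact ((continuous_pow n).mul (Continuous.rexp (by fun_prop))).aestronglyMeasurable
  · filter_upwards with x
    have hxe : (0:ℝ) < Real.exp (-b * x ^ 2) := Real.exp_pos _
    have h1 : |x ^ n * Real.exp (-b * x ^ 2)| = |x| ^ n * Real.exp (-b * x ^ 2) := by
      rw [abs_mul, abs_pow, abs_of_pos hxe]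
    rw [Real.norm_eq_abs, h1]
    have hkey : |x| ^ n ≤ ((n.factorial : ℝ) * (2/b)^n + 1) * Real.exp (b/2 * x ^ 2) := by
      have hexp1 : (1:ℝ) ≤ Real.exp (b/2 * x ^ 2) := by
        rw [← Real.exp_zero]; exact Real.exp_le_exp.mpr (by positivity)
      rcases le_total |x| 1 with hx | hx
      · calc |x| ^ n ≤ 1 := pow_le_one₀ (abs_nonneg x) hx
          _ ≤ _ := by
              have hf1 : (1:ℝ) ≤ (n.factorial : ℝ) := by
                exact_mod_cast Nat.one_le_iff_ne_zero.mpr (Nat.factorial_ne_zero n)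
              nlinarith [(by positivity : (0:ℝ) < (2/b)^n)]
      · have h2n : |x| ^ n ≤ (x ^ 2) ^ n := by
          have : |x| ^ n ≤ (|x| ^ 2) ^ n := by
            rw [← pow_mul]
            exact pow_le_pow_right₀ hx (by omega)
          simpa [sq_abs] using this
        have hfac : (b/2 * x ^ 2) ^ n / (n.factorial : ℝ) ≤ Real.exp (b/2 * x ^ 2) :=
          Real.pow_div_factorial_le_exp (x := b/2 * x ^ 2) (by positivity) n
        have hne : (0:ℝ) < (n.factorial : ℝ) := by exact_mod_cast Nat.factorial_pos n
        have hbne : (b:ℝ) ≠ 0 := hb.ne'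
        have : (x ^ 2) ^ n ≤ (n.factorial : ℝ) * (2/b)^n * Real.exp (b/2 * x ^ 2) := by
          have h := hfac
          rw [div_le_iff₀ hne] at h
          have hh : (b/2 * x ^ 2) ^ n = (b/2)^n * (x^2)^n := by rw [mul_pow]
          rw [hh] at h
          have hpos : (0:ℝ) < (b/2)^n := by positivity
          calc (x ^ 2) ^ n = ((b/2)^n * (x^2)^n) / (b/2)^n := by field_simp
            _ ≤ (Real.exp (b/2 * x ^ 2) * (n.factorial : ℝ)) / (b/2)^n := by
                gcongr
            _ = (n.factorial : ℝ) * (2/b)^n * Real.exp (b/2 * x ^ 2) := by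
                rw [div_eq_mul_inv, ← inv_pow]
                have : ((b:ℝ)/2)⁻¹ = 2/b := by field_simp
                rw [this]; ring
        nlinarith [Real.exp_pos (b/2 * x ^ 2)]
    calc |x| ^ n * Real.exp (-b * x ^ 2)
        ≤ ((n.factorial : ℝ) * (2/b)^n + 1) * Real.exp (b/2 * x ^ 2) * Real.exp (-b * x ^ 2) := by
          exact mul_le_mul_of_nonneg_right hkey hxe.le
      _ = ((n.factorial : ℝ) * (2/b)^n + 1) * Real.exp (-(b/2) * x ^ 2) := by
          rw [mul_assoc, ← Real.exp_add]; ring_nf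



lemma my_tendsto_pow_mul_exp_atTop {b : ℝ} (hb : 0 < b) (n : ℕ) :
    Tendsto (fun x : ℝ => x ^ n * Real.exp (-b * x ^ 2)) atTop (nhds 0) := by
  have h := rpow_mul_exp_neg_mul_sq_isLittleO_exp_neg hb (n : ℝ)
  have heq : (fun x : ℝ => x ^ (n:ℝ) * Real.exp (-b * x ^ 2)) =
      fun x : ℝ => x ^ n * Real.exp (-b * x ^ 2) := by
    funext x; rw [Real.rpow_natCast]
  rw [heq] at h
  have hexp : Tendsto (fun x : ℝ => Real.exp (-(1/2) * x)) atTop (nhds 0) := by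
    apply Real.tendsto_exp_atBot.comp
    exact Tendsto.const_mul_atTop_of_neg (by norm_num) tendsto_id
  exact h.trans_tendsto hexp

lemma my_tendsto_pow_mul_exp_atBot {b : ℝ} (hb : 0 < b) (n : ℕ) :
    Tendsto (fun x : ℝ => x ^ n * Real.exp (-b * x ^ 2)) atBot (nhds 0) := by
  have h : Tendsto (fun x : ℝ => (-1:ℝ)^n * ((-x) ^ n * Real.exp (-b * (-x) ^ 2))) atBot (nhds 0) := by
    have := (my_tendsto_pow_mul_exp_atTop hb n).comp tendsto_neg_atBot_atTop
    simpa using this.const_mul ((-1:ℝ)^n)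
  refine h.congr (fun x => ?_)
  rw [neg_sq, neg_pow]
  ring_nf
  rw [mul_comm n 2, pow_mul]
  norm_num

lemma my_gaussian_recursion {b : ℝ} (hb : 0 < b) (n : ℕ) :
    ∫ x : ℝ, x ^ (n + 2) * Real.exp (-b * x ^ 2) =
      ((n : ℝ) + 1) / (2 * b) * ∫ x : ℝ, x ^ n * Real.exp (-b * x ^ 2) := by
  set f : ℝ → ℝ := fun x => x ^ (n + 1) * Real.exp (-b * x ^ 2) with hf
  set f' : ℝ → ℝ := fun x =>
    ((n : ℝ) + 1) * (x ^ n * Real.exp (-b * x ^ 2)) - (2 * b) * (x ^ (n + 2) * Real.exp (-b * x ^ 2)) with hf'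
  have hderiv : ∀ x : ℝ, HasDerivAt f (f' x) x := by
    intro x
    have h1 : HasDerivAt (fun x : ℝ => x ^ (n + 1)) (((n:ℝ) + 1) * x ^ n) x := by
      simpa using hasDerivAt_pow (n + 1) x
    have h2 : HasDerivAt (fun x : ℝ => Real.exp (-b * x ^ 2)) (Real.exp (-b * x ^ 2) * (-b * (2 * x))) x := by
      have hin : HasDerivAt (fun x : ℝ => -b * x ^ 2) (-b * (2 * x)) x := by
        simpa using (hasDerivAt_pow 2 x).const_mul (-b)
      exact hin.exp
    have := h1.mul h2
    refine this.congr_deriv ?_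
    rw [hf']
    ring
  have hint : Integrable f' := by
    exact ((my_integrable_pow_mul_exp hb n).const_mul _).sub
      ((my_integrable_pow_mul_exp hb (n + 2)).const_mul _)
  have htop : Tendsto f atTop (nhds 0) := my_tendsto_pow_mul_exp_atTop hb (n + 1)
  have hbot : Tendsto f atBot (nhds 0) := my_tendsto_pow_mul_exp_atBot hb (n + 1)
  have key : ∫ x : ℝ, f' x = 0 - 0 :=
    integral_of_hasDerivAt_of_tendsto hderiv hint hbot htop
  rw [hf'] at key
  rw [integral_sub ((my_integrable_pow_mul_exp hb n).const_mul _)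
      ((my_integrable_pow_mul_exp hb (n + 2)).const_mul _)] at key
  rw [integral_const_mul, integral_const_mul] at key
  have h2b : (2 * b) ≠ 0 := by positivity
  rw [div_mul_eq_mul_div, eq_div_iff h2b]
  linarith [key]

lemma my_integral_exp_sq (b : ℝ) (hb : 0 < b) :
    ∫ x : ℝ, x ^ 2 * Real.exp (-b * x ^ 2) = 1 / (2 * b) * Real.sqrt (π / b) := by
  have h := my_gaussian_recursion hb 0
  simp only [pow_zero, one_mul, Nat.cast_zero, zero_add, Nat.reduceAdd] at h
  rw [h, integral_gaussian]

lemma my_integral_exp_four (b : ℝ) (hb : 0 < b) :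
    ∫ x : ℝ, x ^ 4 * Real.exp (-b * x ^ 2) = 3 / (4 * b ^ 2) * Real.sqrt (π / b) := by
  have h := my_gaussian_recursion hb 2
  rw [my_integral_exp_sq b hb, show (2:ℕ) + 2 = 4 by norm_num] at h
  rw [h]
  push_cast
  field_simp
  ring

lemma my_integral_exp_odd (b : ℝ) :
    ∫ x : ℝ, x * Real.exp (-b * x ^ 2) = 0 := by
  have A : MeasurableEmbedding fun x : ℝ => -x :=
    (Homeomorph.neg ℝ).isClosedEmbedding.measurableEmbedding
  have h : ∫ x : ℝ, (-x) * Real.exp (-b * (-x) ^ 2) = ∫ x : ℝ, x * Real.exp (-b * x ^ 2) :=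
    (Measure.measurePreserving_neg (volume : Measure ℝ)).integral_comp A
      (fun y => y * Real.exp (-b * y ^ 2))
  simp only [neg_sq] at h
  have h2 : ∫ x : ℝ, (-x) * Real.exp (-b * x ^ 2) = - ∫ x : ℝ, x * Real.exp (-b * x ^ 2) := by
    rw [← integral_neg]; congr 1; funext x; ring
  rw [h2] at h
  linarith

section GaussianMoments

open scoped ENNReal NNReal

variable {v : ℝ≥0}

lemma my_density_eq (v : ℝ≥0) :
    (fun x => gaussianPDFReal 0 v x) =
      fun x => (Real.sqrt (2 * π * v))⁻¹ * (Real.exp (-(2 * (v:ℝ))⁻¹ * x ^ 2)) := by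
  funext x
  rw [gaussianPDFReal]
  have h : -(x - 0) ^ 2 / (2 * (v:ℝ)) = -(2 * (v:ℝ))⁻¹ * x ^ 2 := by ring
  rw [h]

lemma my_integral_gaussianReal (hv : v ≠ 0) (f : ℝ → ℝ) :
    ∫ x, f x ∂(gaussianReal 0 v) = ∫ x, gaussianPDFReal 0 v x * f x := by
  rw [gaussianReal_of_var_ne_zero 0 hv]
  rw [show gaussianPDF 0 v = (fun x => (((gaussianPDFReal 0 v x).toNNReal : ℝ≥0) : ℝ≥0∞))
    from rfl]
  rw [integral_withDensity_eq_integral_smul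
    ((measurable_gaussianPDFReal 0 v).real_toNNReal) f]
  congr 1
  funext x
  rw [NNReal.smul_def, Real.coe_toNNReal _ (gaussianPDFReal_nonneg 0 v x), smul_eq_mul]

lemma my_integrable_gaussianReal_iff (hv : v ≠ 0) (f : ℝ → ℝ) :
    Integrable f (gaussianReal 0 v) ↔
      Integrable (fun x => gaussianPDFReal 0 v x * f x) volume := by
  rw [gaussianReal_of_var_ne_zero 0 hv]
  rw [show gaussianPDF 0 v = (fun x => (((gaussianPDFReal 0 v x).toNNReal : ℝ≥0) : ℝ≥0∞))
    from rfl]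
  rw [integrable_withDensity_iff_integrable_smul
    ((measurable_gaussianPDFReal 0 v).real_toNNReal),
    show (fun x => (gaussianPDFReal 0 v x).toNNReal • f x) =
      fun x => gaussianPDFReal 0 v x * f x from by
        funext x
        rw [NNReal.smul_def, Real.coe_toNNReal _ (gaussianPDFReal_nonneg 0 v x), smul_eq_mul]]

lemma my_b_pos (hv : v ≠ 0) : (0:ℝ) < (2 * (v:ℝ))⁻¹ := by
  have h : (0:ℝ) < (v:ℝ) := lt_of_le_of_ne (v.coe_nonneg) (by exact_mod_cast (Ne.symm hv))
  positivity

lemma my_gaussianReal_integrable_pow (hv : v ≠ 0) (n : ℕ) :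
    Integrable (fun x : ℝ => x ^ n) (gaussianReal 0 v) := by
  rw [my_integrable_gaussianReal_iff hv,
    show (fun x => gaussianPDFReal 0 v x * x ^ n) =
      fun x => (Real.sqrt (2 * π * v))⁻¹ * (x ^ n * Real.exp (-(2 * (v:ℝ))⁻¹ * x ^ 2)) from by
        funext x
        rw [congrFun (my_density_eq v) x]
        ring]
  exact (my_integrable_pow_mul_exp (my_b_pos hv) n).const_mul _

lemma my_gaussianReal_moment (hv : v ≠ 0) (n : ℕ) :
    ∫ x, x ^ n ∂(gaussianReal 0 v) =
      (Real.sqrt (2 * π * v))⁻¹ * ∫ x, x ^ n * Real.exp (-(2 * (v:ℝ))⁻¹ * x ^ 2) := by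
  rw [my_integral_gaussianReal hv, ← integral_const_mul]
  congr 1
  funext x
  rw [congrFun (my_density_eq v) x]
  ring

lemma my_sqrt_cancel (hv : v ≠ 0) :
    (Real.sqrt (2 * π * v))⁻¹ * Real.sqrt (π / (2 * (v:ℝ))⁻¹) = 1 := by
  have hvr : (0:ℝ) < (v:ℝ) := by positivity
  rw [show π / (2 * (v:ℝ))⁻¹ = 2 * π * v by field_simp]
  rw [inv_mul_cancel₀]
  positivity

lemma my_gaussianReal_moment_one (hv : v ≠ 0) :
    ∫ x, x ∂(gaussianReal 0 v) = 0 := by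
  have h := my_gaussianReal_moment hv 1
  simp only [pow_one] at h
  rw [h, my_integral_exp_odd, mul_zero]

lemma my_gaussianReal_moment_two (hv : v ≠ 0) :
    ∫ x, x ^ 2 ∂(gaussianReal 0 v) = (v:ℝ) := by
  have hvr : (0:ℝ) < (v:ℝ) := by positivity
  have hb := my_b_pos hv
  rw [my_gaussianReal_moment hv 2, my_integral_exp_sq _ hb, ← mul_assoc,
    mul_comm ((Real.sqrt (2 * π * v))⁻¹) (1 / (2 * (2 * (v:ℝ))⁻¹)), mul_assoc,
    my_sqrt_cancel hv, mul_one]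
  field_simp

lemma my_gaussianReal_moment_four (hv : v ≠ 0) :
    ∫ x, x ^ 4 ∂(gaussianReal 0 v) = 3 * (v:ℝ) ^ 2 := by
  have hvr : (0:ℝ) < (v:ℝ) := by positivity
  have hb := my_b_pos hv
  rw [my_gaussianReal_moment hv 4, my_integral_exp_four _ hb, ← mul_assoc,
    mul_comm ((Real.sqrt (2 * π * v))⁻¹) (3 / (4 * ((2 * (v:ℝ))⁻¹) ^ 2)), mul_assoc,
    my_sqrt_cancel hv, mul_one]
  field_simp
  ring

end GaussianMoments

section RV

open scoped ENNReal NNReal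

variable {Ω : Type*} [MeasurableSpace Ω] {μ : Measure Ω} {X : Ω → ℝ} {v : ℝ≥0}

lemma my_rv_moment (hX : AEMeasurable X μ) (hlaw : Measure.map X μ = gaussianReal 0 v)
    (n : ℕ) : ∫ ω, X ω ^ n ∂μ = ∫ x, x ^ n ∂(gaussianReal 0 v) := by
  rw [← hlaw, integral_map (f := fun x => x ^ n) hX (by fun_prop)]

lemma my_rv_integrable_pow (hX : AEMeasurable X μ)
    (hlaw : Measure.map X μ = gaussianReal 0 v) (hv : v ≠ 0) (n : ℕ) :
    Integrable (fun ω => X ω ^ n) μ := by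
  have h := my_gaussianReal_integrable_pow hv n
  rw [← hlaw] at h
  exact (integrable_map_measure (g := fun x => x ^ n) (f := X) (by fun_prop) hX).mp h

lemma my_iIndepFun_congr {ι : Type*} {β : ι → Type*}
    [m : ∀ i, MeasurableSpace (β i)] {f g : ∀ i, Ω → β i}
    (hf : ProbabilityTheory.iIndepFun f μ) (h : ∀ i, f i =ᵐ[μ] g i) :
    ProbabilityTheory.iIndepFun g μ := by
  rw [ProbabilityTheory.iIndepFun_iff_measure_inter_preimage_eq_mul] at hf ⊢
  intro S sets hmeas
  have hae : ∀ i ∈ S, (f i ⁻¹' sets i : Set Ω) =ᵐ[μ] (g i ⁻¹' sets i : Set Ω) := by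
    intro i _
    filter_upwards [h i] with ω hω
    change (f i ω ∈ sets i) = (g i ω ∈ sets i)
    rw [hω]
  have h1 : μ (⋂ i ∈ S, g i ⁻¹' sets i) = μ (⋂ i ∈ S, f i ⁻¹' sets i) := by
    refine measure_congr ?_
    have hall : ∀ᵐ ω ∂μ, ∀ i ∈ S, f i ω = g i ω :=
      (MeasureTheory.ae_ball_iff S.countable_toSet).mpr fun i _ => h i
    filter_upwards [hall] with ω hω
    change (ω ∈ ⋂ i ∈ S, g i ⁻¹' sets i) = (ω ∈ ⋂ i ∈ S, f i ⁻¹' sets i)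
    simp only [Set.mem_iInter, Set.mem_preimage, eq_iff_iff]
    exact ⟨fun hg i hi => by rw [hω i hi]; exact hg i hi,
      fun hgg i hi => by rw [← hω i hi]; exact hgg i hi⟩
  rw [h1, hf S hmeas]
  refine Finset.prod_congr rfl fun i hi => measure_congr (hae i hi)
end RV

section Key

open scoped ENNReal NNReal

lemma my_key_bound {Ω : Type*} [MeasurableSpace Ω] (μ : Measure Ω) [IsProbabilityMeasure μ]
    {τ : ℝ} (hτ : 0 < τ) {P : ℕ} (hP : 1 ≤ P)
    (φf ef : Fin P → Ω → ℝ)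
    (hφm : ∀ j, Measurable (φf j)) (hem : ∀ j, Measurable (ef j))
    (hindep : ProbabilityTheory.iIndepFun (Sum.elim φf ef) μ)
    (hφlaw : ∀ j, Measure.map (φf j) μ = gaussianReal 0 (τ ^ 2 / P).toNNReal)
    (helaw : ∀ j, Measure.map (ef j) μ = gaussianReal 0 (τ ^ 2 / P).toNNReal)
    {η : ℝ} (hη : 0 < η) :
    μ {ω | η ≤ |(∑ j, φf j ω ^ 2) - τ ^ 2|} ≤ ENNReal.ofReal (2 * τ ^ 4 / P / η ^ 2)
    ∧ μ {ω | η ≤ |∑ j, φf j ω * ef j ω|} ≤ ENNReal.ofReal (τ ^ 4 / P / η ^ 2) := by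
  have hPpos : (0:ℝ) < P := by exact_mod_cast hP
  set V : ℝ≥0 := (τ ^ 2 / P).toNNReal with hVdef
  have hVr : (V:ℝ) = τ ^ 2 / P := Real.coe_toNNReal _ (by positivity)
  have hVne : V ≠ 0 := (Real.toNNReal_pos.mpr (by positivity)).ne'
  have hφae : ∀ j, AEMeasurable (φf j) μ := fun j => (hφm j).aemeasurable
  have heae : ∀ j, AEMeasurable (ef j) μ := fun j => (hem j).aemeasurable
  have intφ : ∀ (j) (n : ℕ), Integrable (fun ω => φf j ω ^ n) μ :=
    fun j n => my_rv_integrable_pow (hφae j) (hφlaw j) hVne n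
  have inte : ∀ (j) (n : ℕ), Integrable (fun ω => ef j ω ^ n) μ :=
    fun j n => my_rv_integrable_pow (heae j) (helaw j) hVne n
  have intφ1 : ∀ j, Integrable (φf j) μ :=
    fun j => (intφ j 1).congr (Filter.Eventually.of_forall fun ω => pow_one _)
  have inte1 : ∀ j, Integrable (ef j) μ :=
    fun j => (inte j 1).congr (Filter.Eventually.of_forall fun ω => pow_one _)
  have meanφ1 : ∀ j, ∫ ω, φf j ω ∂μ = 0 := by
    intro j
    have h := my_rv_moment (hφae j) (hφlaw j) 1
    simpa [my_gaussianReal_moment_one hVne] using h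
  have meane1 : ∀ j, ∫ ω, ef j ω ∂μ = 0 := by
    intro j
    have h := my_rv_moment (heae j) (helaw j) 1
    simpa [my_gaussianReal_moment_one hVne] using h
  have meanφ2 : ∀ j, ∫ ω, φf j ω ^ 2 ∂μ = (V:ℝ) := by
    intro j; rw [my_rv_moment (hφae j) (hφlaw j) 2, my_gaussianReal_moment_two hVne]
  have meane2 : ∀ j, ∫ ω, ef j ω ^ 2 ∂μ = (V:ℝ) := by
    intro j; rw [my_rv_moment (heae j) (helaw j) 2, my_gaussianReal_moment_two hVne]
  have meanφ4 : ∀ j, ∫ ω, φf j ω ^ 4 ∂μ = 3 * (V:ℝ) ^ 2 := by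
    intro j; rw [my_rv_moment (hφae j) (hφlaw j) 4, my_gaussianReal_moment_four hVne]
  constructor
  · -- part 1 : S
    set Xs : Fin P → Ω → ℝ := fun j ω => φf j ω ^ 2 with hXs
    have hXsmem : ∀ j, MemLp (Xs j) 2 μ := by
      intro j
      refine (memLp_two_iff_integrable_sq ((hφm j).pow_const 2).aestronglyMeasurable).mpr ?_
      refine (intφ j 4).congr (Filter.Eventually.of_forall fun ω => ?_)
      simp only [hXs, Pi.pow_apply]
      ring
    have hXsvar : ∀ j : Fin P, ProbabilityTheory.variance (Xs j) μ = 2 * (V:ℝ) ^ 2 := by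
      intro j
      rw [ProbabilityTheory.variance_eq_sub (hXsmem j)]
      have h1 : (∫ ω, (Xs j ^ 2) ω ∂μ) = 3 * (V:ℝ) ^ 2 := by
        rw [← meanφ4 j]
        refine integral_congr_ae (Filter.Eventually.of_forall fun ω => ?_)
        simp only [hXs, Pi.pow_apply]
        ring
      have h2 : (∫ ω, Xs j ω ∂μ) = (V:ℝ) := meanφ2 j
      rw [h1, h2]; ring
    have hSmem : MemLp (∑ j, Xs j) 2 μ := memLp_finsetSum' _ (fun j _ => hXsmem j)
    have hSmean : (∫ ω, (∑ j, Xs j) ω ∂μ) = τ ^ 2 := by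
      have h1 : (∫ ω, (∑ j, Xs j) ω ∂μ) = ∑ j, ∫ ω, Xs j ω ∂μ := by
        rw [integral_congr_ae (Filter.Eventually.of_forall fun ω =>
          (Finset.sum_apply ω Finset.univ Xs : (∑ j, Xs j) ω = ∑ j, Xs j ω))]
        exact integral_finset_sum _ fun j _ => intφ j 2
      rw [h1]
      simp only [hXs, meanφ2, Finset.sum_const, Finset.card_univ, Fintype.card_fin, nsmul_eq_mul]
      rw [hVr]; field_simp
    have hSvar : ProbabilityTheory.variance (∑ j, Xs j) μ = 2 * τ ^ 4 / P := by
      rw [ProbabilityTheory.IndepFun.variance_sum (fun j _ => hXsmem j) ?hpair]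
      · simp only [hXsvar, Finset.sum_const, Finset.card_univ, Fintype.card_fin, nsmul_eq_mul]
        rw [hVr]; field_simp
      case hpair =>
        intro i _ j hj hij
        have h := hindep.indepFun (show (Sum.inl i : Fin P ⊕ Fin P) ≠ Sum.inl j by
          simp only [ne_eq, Sum.inl.injEq]; exact hij)
        exact h.comp (measurable_id.pow_const 2) (measurable_id.pow_const 2)
    have hcheb := ProbabilityTheory.meas_ge_le_variance_div_sq (μ := μ) hSmem hη
    rw [hSvar, hSmean] at hcheb
    refine le_trans (le_of_eq ?_) hcheb
    congr 1
    ext ω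
    simp only [Set.mem_setOf_eq, Finset.sum_apply, hXs]
  · -- part 2 : T
    set Xt : Fin P → Ω → ℝ := fun j ω => φf j ω * ef j ω with hXt
    have hje : ∀ j : Fin P, ProbabilityTheory.IndepFun (φf j) (ef j) μ := fun j =>
      hindep.indepFun (show (Sum.inl j : Fin P ⊕ Fin P) ≠ Sum.inr j by simp)
    have hje2 : ∀ j : Fin P, ProbabilityTheory.IndepFun
        (fun ω => φf j ω ^ 2) (fun ω => ef j ω ^ 2) μ := fun j =>
      (hje j).comp (measurable_id.pow_const 2) (measurable_id.pow_const 2)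
    have hXtint : ∀ j, Integrable (Xt j) μ := by
      intro j
      have h := (hje j).integrable_mul (intφ1 j) (inte1 j)
      exact h.congr (Filter.Eventually.of_forall fun ω => rfl)
    have hXtmem : ∀ j, MemLp (Xt j) 2 μ := by
      intro j
      refine (memLp_two_iff_integrable_sq ((hφm j).mul (hem j)).aestronglyMeasurable).mpr ?_
      have h := (hje2 j).integrable_mul (intφ j 2) (inte j 2)
      refine h.congr (Filter.Eventually.of_forall fun ω => ?_)
      simp only [hXt, Pi.mul_apply, Pi.pow_apply]
      ring
    have hXtmean : ∀ j, (∫ ω, Xt j ω ∂μ) = 0 := by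
      intro j
      have h := (hje j).integral_mul_eq_mul_integral (intφ1 j).aestronglyMeasurable (inte1 j).aestronglyMeasurable
      have h' : (∫ ω, Xt j ω ∂μ) = (∫ ω, (φf j * ef j) ω ∂μ) := rfl
      rw [h', h, meanφ1 j, meane1 j, mul_zero]
    have hXtvar : ∀ j : Fin P, ProbabilityTheory.variance (Xt j) μ = (V:ℝ) ^ 2 := by
      intro j
      rw [ProbabilityTheory.variance_eq_sub (hXtmem j)]
      have h1 : (∫ ω, (Xt j ^ 2) ω ∂μ) = (V:ℝ) * (V:ℝ) := by
        have h := (hje2 j).integral_mul_eq_mul_integral (intφ j 2).aestronglyMeasurable (inte j 2).aestronglyMeasurable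
        have h2 : (∫ ω, (Xt j ^ 2) ω ∂μ) =
            (∫ ω, ((fun ω => φf j ω ^ 2) * fun ω => ef j ω ^ 2) ω ∂μ) := by
          refine integral_congr_ae (Filter.Eventually.of_forall fun ω => ?_)
          simp only [hXt, Pi.mul_apply, Pi.pow_apply]
          ring
        rw [h2, h, meanφ2 j, meane2 j]
      rw [h1, hXtmean j]
      ring
    have hTmem : MemLp (∑ j, Xt j) 2 μ := memLp_finsetSum' _ (fun j _ => hXtmem j)
    have hTmean : (∫ ω, (∑ j, Xt j) ω ∂μ) = 0 := by
      have h1 : (∫ ω, (∑ j, Xt j) ω ∂μ) = ∑ j, ∫ ω, Xt j ω ∂μ := by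
        rw [integral_congr_ae (Filter.Eventually.of_forall fun ω =>
          (Finset.sum_apply ω Finset.univ Xt : (∑ j, Xt j) ω = ∑ j, Xt j ω))]
        exact integral_finset_sum _ fun j _ => hXtint j
      rw [h1]
      simp [hXtmean]
    have hTvar : ProbabilityTheory.variance (∑ j, Xt j) μ = τ ^ 4 / P := by
      rw [ProbabilityTheory.IndepFun.variance_sum (fun j _ => hXtmem j) ?hpair]
      · simp only [hXtvar, Finset.sum_const, Finset.card_univ, Fintype.card_fin, nsmul_eq_mul]
        rw [hVr]; field_simp
      case hpair =>
        intro i _ j _ hij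
        have hGmeas : ∀ k : Fin P ⊕ Fin P, Measurable (Sum.elim φf ef k) := by
          intro k; cases k with
          | inl a => exact hφm a
          | inr a => exact hem a
        have h := ProbabilityTheory.iIndepFun.indepFun_mul_mul hindep hGmeas
          (Sum.inl i) (Sum.inr i) (Sum.inl j) (Sum.inr j)
          (by simp only [ne_eq, Sum.inl.injEq]; exact hij) (by simp) (by simp)
          (by simp only [ne_eq, Sum.inr.injEq]; exact hij)
        exact h
    have hcheb := ProbabilityTheory.meas_ge_le_variance_div_sq (μ := μ) hTmem hη
    rw [hTvar, hTmean] at hcheb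
    refine le_trans (le_of_eq ?_) hcheb
    congr 1
    ext ω
    simp only [Set.mem_setOf_eq, Finset.sum_apply, hXt, sub_zero]
end Key


/-- Under the random effects model `φ ~ Normal(0, τ²P⁻¹I_P)`,
`β = ω₀φ + e` with `e ~ Normal(0, τ²P⁻¹I_P)` independent of `φ` (so
`β | φ ~ Normal(ω₀φ, τ²P⁻¹I_P)`), with `Σ = I_P` and `σ_a² = 1`, the selection
bias `Δ(1) = (φᵀβ)/(1 + φᵀφ)` converges in probability to `ω₀τ²/(1 + τ²)` as
`P → ∞`. -/
theorem rem_selection_bias_limit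
    {Ω : Type*} [MeasurableSpace Ω] (μ : Measure Ω) [IsProbabilityMeasure μ]
    (ω₀ τ : ℝ) (hτ : 0 < τ)
    (φv e βv : (P : ℕ) → Ω → (Fin P → ℝ))
    -- all 2P coordinates of (φ, e) are jointly independent Gaussians
    (hindep : ∀ P : ℕ, iIndepFun
      (Sum.elim (fun j ω => φv P ω j) (fun j ω => e P ω j) :
        (Fin P ⊕ Fin P) → Ω → ℝ) μ)
    (hφlaw : ∀ P (j : Fin P), Measure.map (fun ω => φv P ω j) μ =
      gaussianReal 0 (τ ^ 2 / P).toNNReal)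
    (helaw : ∀ P (j : Fin P), Measure.map (fun ω => e P ω j) μ =
      gaussianReal 0 (τ ^ 2 / P).toNNReal)
    (hβ : ∀ P ω (j : Fin P), βv P ω j = ω₀ * φv P ω j + e P ω j)
    (Δ : (P : ℕ) → Ω → ℝ)
    (hΔ : Δ = fun P ω =>
      (φv P ω ⬝ᵥ βv P ω) / (1 + φv P ω ⬝ᵥ φv P ω)) :
    ∀ δ : ℝ, 0 < δ →
      Tendsto (fun P : ℕ =>
          μ {ω | δ ≤ |Δ P ω - ω₀ * τ ^ 2 / (1 + τ ^ 2)|}) atTop (nhds 0) := by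
  intro δ hδ
  simp only [hΔ]
  have hτ2 : (0:ℝ) < 1 + τ ^ 2 := by positivity
  obtain ⟨η, hη, hball⟩ : ∃ η > 0, ∀ s t : ℝ, |s - τ ^ 2| < η → |t| < η →
      |(ω₀ * s + t) / (1 + s) - ω₀ * τ ^ 2 / (1 + τ ^ 2)| < δ := by
    have hcont : ContinuousAt (fun p : ℝ × ℝ => (ω₀ * p.1 + p.2) / (1 + p.1)) (τ ^ 2, 0) :=
      ContinuousAt.div (by fun_prop) (by fun_prop) (by simpa using hτ2.ne')
    rw [Metric.continuousAt_iff] at hcont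
    obtain ⟨η, hη, hc⟩ := hcont δ hδ
    refine ⟨η, hη, fun s t hs ht => ?_⟩
    have hd : dist ((s, t) : ℝ × ℝ) ((τ ^ 2, 0) : ℝ × ℝ) < η := by
      rw [Prod.dist_eq]
      exact max_lt (by simpa [Real.dist_eq] using hs) (by simpa [Real.dist_eq] using ht)
    have h := hc hd
    rw [Real.dist_eq] at h
    simpa [add_zero] using h
  have key : ∀ P : ℕ, 1 ≤ P →
      μ {ω | δ ≤ |(φv P ω ⬝ᵥ βv P ω) / (1 + φv P ω ⬝ᵥ φv P ω) - ω₀ * τ ^ 2 / (1 + τ ^ 2)|}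
        ≤ ENNReal.ofReal (2 * τ ^ 4 / P / η ^ 2) + ENNReal.ofReal (τ ^ 4 / P / η ^ 2) := by
    intro P hP
    have hφae : ∀ j : Fin P, AEMeasurable (fun ω => φv P ω j) μ := fun j =>
      aemeasurable_of_map_neZero (by rw [hφlaw P j]; infer_instance)
    have heae : ∀ j : Fin P, AEMeasurable (fun ω => e P ω j) μ := fun j =>
      aemeasurable_of_map_neZero (by rw [helaw P j]; infer_instance)
    set φf : Fin P → Ω → ℝ := fun j => (hφae j).mk _ with hφf
    set ef : Fin P → Ω → ℝ := fun j => (heae j).mk _ with hef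
    have hφm : ∀ j, Measurable (φf j) := fun j => (hφae j).measurable_mk
    have hem : ∀ j, Measurable (ef j) := fun j => (heae j).measurable_mk
    have hφeq : ∀ j, (fun ω => φv P ω j) =ᵐ[μ] φf j := fun j => (hφae j).ae_eq_mk
    have heeq : ∀ j, (fun ω => e P ω j) =ᵐ[μ] ef j := fun j => (heae j).ae_eq_mk
    have hφlaw' : ∀ j, Measure.map (φf j) μ = gaussianReal 0 (τ ^ 2 / P).toNNReal := fun j => by
      rw [← Measure.map_congr (hφeq j), hφlaw P j]
    have helaw' : ∀ j, Measure.map (ef j) μ = gaussianReal 0 (τ ^ 2 / P).toNNReal := fun j => by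
      rw [← Measure.map_congr (heeq j), helaw P j]
    have hindep' : iIndepFun (Sum.elim φf ef) μ := by
      refine my_iIndepFun_congr (hindep P) fun k => ?_
      cases k with
      | inl j => exact hφeq j
      | inr j => exact heeq j
    obtain ⟨hb1, hb2⟩ := my_key_bound μ hτ hP φf ef hφm hem hindep' hφlaw' helaw' hη
    have h1 : ∀ᵐ ω ∂μ, ∀ j, φv P ω j = φf j ω := ae_all_iff.mpr hφeq
    have h2 : ∀ᵐ ω ∂μ, ∀ j, e P ω j = ef j ω := ae_all_iff.mpr heeq
    calc μ {ω | δ ≤ |(φv P ω ⬝ᵥ βv P ω) / (1 + φv P ω ⬝ᵥ φv P ω) - ω₀ * τ ^ 2 / (1 + τ ^ 2)|}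
        = μ {ω | δ ≤ |(ω₀ * (∑ j, φf j ω ^ 2) + ∑ j, φf j ω * ef j ω) / (1 + ∑ j, φf j ω ^ 2)
              - ω₀ * τ ^ 2 / (1 + τ ^ 2)|} := by
          refine measure_congr ?_
          filter_upwards [h1, h2] with ω hω1 hω2
          have hdot1 : φv P ω ⬝ᵥ βv P ω = ω₀ * (∑ j, φf j ω ^ 2) + ∑ j, φf j ω * ef j ω := by
            simp only [dotProduct, hβ P ω]
            rw [Finset.mul_sum, ← Finset.sum_add_distrib]
            refine Finset.sum_congr rfl fun j _ => ?_
            rw [hω1 j, hω2 j]; ring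
          have hdot2 : φv P ω ⬝ᵥ φv P ω = ∑ j, φf j ω ^ 2 := by
            simp only [dotProduct]
            refine Finset.sum_congr rfl fun j _ => ?_
            rw [hω1 j]; ring
          exact congrArg (fun z : ℝ => (δ ≤ |z - ω₀ * τ ^ 2 / (1 + τ ^ 2)|))
            (by rw [hdot1, hdot2])
      _ ≤ μ ({ω | η ≤ |(∑ j, φf j ω ^ 2) - τ ^ 2|} ∪ {ω | η ≤ |∑ j, φf j ω * ef j ω|}) := by
          refine measure_mono ?_
          intro ω hω
          rw [Set.mem_union]
          by_contra hcon
          push_neg at hcon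
          obtain ⟨hc1, hc2⟩ := hcon
          simp only [Set.mem_setOf_eq, not_le] at hc1 hc2
          have := hball _ _ hc1 hc2
          simp only [Set.mem_setOf_eq] at hω
          exact absurd hω (not_le.mpr this)
      _ ≤ μ {ω | η ≤ |(∑ j, φf j ω ^ 2) - τ ^ 2|} + μ {ω | η ≤ |∑ j, φf j ω * ef j ω|} :=
          measure_union_le _ _
      _ ≤ _ := add_le_add hb1 hb2
  have hup : Tendsto (fun P : ℕ => ENNReal.ofReal (2 * τ ^ 4 / P / η ^ 2)
      + ENNReal.ofReal (τ ^ 4 / P / η ^ 2)) atTop (nhds 0) := by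
    have l1 : Tendsto (fun P : ℕ => (2 * τ ^ 4 / P / η ^ 2 : ℝ)) atTop (nhds 0) := by
      refine (tendsto_const_div_atTop_nhds_zero_nat (2 * τ ^ 4 / η ^ 2)).congr fun P => by ring
    have l2 : Tendsto (fun P : ℕ => (τ ^ 4 / P / η ^ 2 : ℝ)) atTop (nhds 0) := by
      refine (tendsto_const_div_atTop_nhds_zero_nat (τ ^ 4 / η ^ 2)).congr fun P => by ring
    have h := (ENNReal.tendsto_ofReal l1).add (ENNReal.tendsto_ofReal l2)
    simpa using h
  refine tendsto_of_tendsto_of_tendsto_of_le_of_le' tendsto_const_nhds hup ?_ ?_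
  · exact Filter.Eventually.of_forall fun P => zero_le
  · filter_upwards [eventually_ge_atTop 1] with P hP using key P hP
end

section
/- In the latent factor model Σ = ΛΛᵀ + σ_x² I with L nonzero eigenvalues κ₁,…,κ_L of ΛΛᵀ, and with W = Γᵀβ, Z = Γᵀφ where β ~ Normal(0, τ_β²I) and φ ~ Normal(0, τ_φ²I) independent, the selection bias satisfies Δ(a) = a[Σ_{j=1}^L (κ_j + σ_x²)W_jZ_j + σ_x²Σ_{j=L+1}^P W_jZ_j] / [σ_a² + Σ_{j=1}^L (κ_j+σ_x²)Z_j² + σ_x²Σ_{j=L+1}^P Z_j²]; in particular, when σ_x = 0 this reduces exactly to Δ(a) = a(Σ_{j=1}^L κ_jW_jZ_j)/(σ_a² + Σ_{j=1}^L κ_jZ_j²), which depends on only L (not P) independent Gaussian pairs and hence does not degenerate as P → ∞ with L fixed. -/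
open MeasureTheory ProbabilityTheory Filter Finset

/-- In the latent factor model `Σ = ΛΛᵀ + σ_x²I` with `L`
nonzero eigenvalues `κ₁,…,κ_L` of `ΛΛᵀ` (so the eigenvalues of `Σ` are
`κ_j + σ_x²` for `j ≤ L` and `σ_x²` for `j > L`), and with `W = Γᵀβ`, `Z = Γᵀφ`
where `β ~ Normal(0, τ_β²I)` and `φ ~ Normal(0, τ_φ²I)` independently, the
selection bias `Δ(a) = a(Σ_jλ_jW_jZ_j)/(σ_a² + Σ_jλ_jZ_j²)` satisfies the
stated split into the leading `L` coordinates and the rest; in particular when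
`σ_x = 0` it reduces exactly to
`Δ(a) = a(Σ_{j≤L}κ_jW_jZ_j)/(σ_a² + Σ_{j≤L}κ_jZ_j²)`, which involves only `L`
(not `P`) independent Gaussian pairs. -/
theorem latent_factor_selection_bias
    {Ω : Type*} [MeasurableSpace Ω] (μ : Measure Ω) [IsProbabilityMeasure μ]
    {P L : ℕ} (hLP : L ≤ P)
    (a σa σx τβ τφ : ℝ) (hσa : 0 < σa) (hτβ : 0 < τβ) (hτφ : 0 < τφ)
    (κ : Fin P → ℝ) (hκ : ∀ j, 0 ≤ κ j)
    (lam : Fin P → ℝ)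
    (hlam : lam = fun j : Fin P => if (j : ℕ) < L then κ j + σx ^ 2 else σx ^ 2)
    (W Z : Ω → (Fin P → ℝ))
    -- W_j i.i.d. Normal(0, τ_β²), Z_j i.i.d. Normal(0, τ_φ²), all independent
    (hindep : iIndepFun
      (Sum.elim (fun (j : Fin P) ω => W ω j) (fun (j : Fin P) ω => Z ω j) :
        (Fin P ⊕ Fin P) → Ω → ℝ) μ)
    (hWlaw : ∀ j, Measure.map (fun ω => W ω j) μ = gaussianReal 0 (τβ ^ 2).toNNReal)
    (hZlaw : ∀ j, Measure.map (fun ω => Z ω j) μ = gaussianReal 0 (τφ ^ 2).toNNReal)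
    (Δ : Ω → ℝ)
    (hΔ : Δ = fun ω =>
      a * (∑ j, lam j * W ω j * Z ω j) / (σa ^ 2 + ∑ j, lam j * (Z ω j) ^ 2)) :
    -- (1) split into the leading L coordinates and the remaining P − L
    (∀ ω, Δ ω =
      a * ((∑ j ∈ univ.filter (fun j : Fin P => (j : ℕ) < L),
              (κ j + σx ^ 2) * W ω j * Z ω j) +
            σx ^ 2 * ∑ j ∈ univ.filter (fun j : Fin P => ¬ (j : ℕ) < L),
              W ω j * Z ω j) /
        (σa ^ 2 +
          (∑ j ∈ univ.filter (fun j : Fin P => (j : ℕ) < L),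
            (κ j + σx ^ 2) * (Z ω j) ^ 2) +
          σx ^ 2 * ∑ j ∈ univ.filter (fun j : Fin P => ¬ (j : ℕ) < L),
            (Z ω j) ^ 2) ∧
    -- (2) when σ_x = 0 only the leading L coordinates remain
    (σx = 0 → ∀ ω, Δ ω =
      a * (∑ j ∈ univ.filter (fun j : Fin P => (j : ℕ) < L), κ j * W ω j * Z ω j) /
        (σa ^ 2 + ∑ j ∈ univ.filter (fun j : Fin P => (j : ℕ) < L),
          κ j * (Z ω j) ^ 2))) := by
  subst hlam hΔ
  have key : ∀ f : Fin P → ℝ,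
      (∑ j : Fin P, (if (j : ℕ) < L then κ j + σx ^ 2 else σx ^ 2) * f j) =
      (∑ j ∈ univ.filter (fun j : Fin P => (j : ℕ) < L), (κ j + σx ^ 2) * f j) +
        σx ^ 2 * ∑ j ∈ univ.filter (fun j : Fin P => ¬ (j : ℕ) < L), f j := by
    intro f
    rw [Finset.mul_sum,
      ← Finset.sum_filter_add_sum_filter_not univ (fun j : Fin P => (j : ℕ) < L)]
    congr 1
    · exact Finset.sum_congr rfl (fun j hj => by simp only [Finset.mem_filter] at hj; simp [hj.2])
    · exact Finset.sum_congr rfl (fun j hj => by simp only [Finset.mem_filter] at hj; simp [hj.2])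
  intro ω
  constructor
  · beta_reduce
    simp only [mul_assoc]
    rw [key, key, add_assoc]
  · intro hσ ω
    subst hσ
    beta_reduce
    simp only [ne_eq, OfNat.ofNat_ne_zero, not_false_eq_true, zero_pow, add_zero, zero_mul,
      mul_assoc]
    rw [Finset.sum_filter, Finset.sum_filter]
    simp only [ite_mul, zero_mul]
end
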